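/- arXiv:2007.08347 — 2 statements merged into one kernel-verified Lean document; each statement's English description precedes it below -/
import Mathlib

section
/- Let M = ℤ^n, let P be a commutative monoid with a monoid homomorphism r : P → M, and let 𝔪 be the ideal of non-units of P. Let f be an element of the completion of the monoid algebra k[P] with respect to 𝔪 satisfying f ≡ 1 mod 𝔪. Then there is a unique convergent product expansion f = ∏_{m ∈ M_prim ∪ {0}} f_m, where M_prim is the set of primitive elements of M, each f_m ≡ 1 mod 𝔪, and every monomial z^p appearing in f_m − 1 satisfies r(p) positively proportional to m (or r(p) = 0 when m = 0). -/
/-- `m` is a primitive element of `ℤⁿ`: nonzero and not of the form `j • m'` for `j ≥ 2`. -/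
def IsPrimitiveVec {n : ℕ} (m : Fin n → ℤ) : Prop :=
  m ≠ 0 ∧ ∀ (j : ℕ) (m' : Fin n → ℤ), 2 ≤ j → m ≠ (j : ℤ) • m'



namespace DirFact

variable {n : ℕ}

/-- gcd of the absolute values of the coordinates -/
def gc (v : Fin n → ℤ) : ℕ := Finset.univ.gcd (fun i => (v i).natAbs)

lemma gc_dvd (v : Fin n → ℤ) (i : Fin n) : (gc v : ℤ) ∣ v i := by
  have h := Finset.gcd_dvd (f := fun i => (v i).natAbs) (Finset.mem_univ i)
  exact Int.dvd_natAbs.mp (Int.natCast_dvd_natCast.mpr h)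

lemma gc_eq_zero_iff (v : Fin n → ℤ) : gc v = 0 ↔ v = 0 := by
  rw [gc, Finset.gcd_eq_zero_iff]
  constructor
  · intro h; funext i; simpa [Int.natAbs_eq_zero] using h i (Finset.mem_univ i)
  · intro h i _; simp [h]

lemma gc_pos (v : Fin n → ℤ) (hv : v ≠ 0) : 0 < gc v :=
  Nat.pos_of_ne_zero (fun h => hv ((gc_eq_zero_iff v).mp h))

/-- primitive part -/
def pp (v : Fin n → ℤ) : Fin n → ℤ := fun i => v i / (gc v : ℤ)

lemma smul_pp (v : Fin n → ℤ) : (gc v : ℤ) • pp v = v := by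
  funext i
  simp only [Pi.smul_apply, pp, smul_eq_mul]
  exact Int.mul_ediv_cancel' (gc_dvd v i)

lemma dvd_gc {v : Fin n → ℤ} {d : ℕ} (h : ∀ i, (d : ℤ) ∣ v i) : d ∣ gc v := by
  refine Finset.dvd_gcd (fun i _ => ?_)
  exact Int.natCast_dvd.mp (h i)

lemma pp_primitive (v : Fin n → ℤ) (hv : v ≠ 0) : IsPrimitiveVec (pp v) := by
  constructor
  · intro h
    apply hv
    rw [← smul_pp v, h, smul_zero]
  · intro j m' hj heq
    have hvj : v = ((gc v * j : ℕ) : ℤ) • m' := by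
      conv_lhs => rw [← smul_pp v, heq]
      rw [smul_smul]
      push_cast
      rfl
    have hdvd : gc v * j ∣ gc v := by
      refine dvd_gc (fun i => ?_)
      refine ⟨m' i, ?_⟩
      conv_lhs => rw [hvj]
      rw [Pi.smul_apply, smul_eq_mul]
    have := Nat.le_of_dvd (gc_pos v hv) hdvd
    nlinarith [gc_pos v hv]

lemma gc_nsmul (a : ℕ) (m : Fin n → ℤ) : gc ((a : ℤ) • m) = a * gc m := by
  unfold gc
  have : (fun i => (((a:ℤ) • m) i).natAbs) = fun i => a * (m i).natAbs := by
    funext i; simp [Int.natAbs_mul]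
  rw [this, Finset.gcd_mul_left]
  simp

lemma prim_gc_one {m : Fin n → ℤ} (hm : IsPrimitiveVec m) : gc m = 1 := by
  rcases hm with ⟨h0, h2⟩
  rcases Nat.lt_or_ge (gc m) 2 with h | h
  · interval_cases h' : gc m
    · exact absurd ((gc_eq_zero_iff m).mp h') h0
    · rfl
  · exact absurd (smul_pp m).symm (h2 (gc m) (pp m) h)

lemma pp_unique {m : Fin n → ℤ} {a : ℕ} (ha : 0 < a) (hm : IsPrimitiveVec m)
    {v : Fin n → ℤ} (hv : v = (a : ℤ) • m) : pp v = m := by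
  have hg : gc v = a := by rw [hv, gc_nsmul, prim_gc_one hm, mul_one]
  funext i
  rw [pp, hg, hv]
  simp only [Pi.smul_apply, smul_eq_mul]
  rw [Int.mul_ediv_cancel_left]
  exact_mod_cast ha.ne'

/-- the direction class of a vector: `0` or the primitive part. -/
def cls (v : Fin n → ℤ) : Fin n → ℤ := if v = 0 then 0 else pp v

lemma cls_zero : cls (0 : Fin n → ℤ) = 0 := by simp [cls]

lemma cls_eq_zero_iff (v : Fin n → ℤ) : cls v = 0 ↔ v = 0 := by
  unfold cls
  split
  · simpa
  · rename_i h
    simp only [iff_false, h, not_false_iff]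
    exact (pp_primitive v h).1

lemma cls_class (v : Fin n → ℤ) : cls v = 0 ∨ IsPrimitiveVec (cls v) := by
  unfold cls
  split
  · exact Or.inl rfl
  · exact Or.inr (pp_primitive v (by assumption))

lemma cls_smul (v : Fin n → ℤ) (hv : v ≠ 0) : ∃ a : ℕ, 0 < a ∧ v = (a : ℤ) • cls v := by
  refine ⟨gc v, gc_pos v hv, ?_⟩
  rw [cls, if_neg hv, smul_pp]

lemma cls_unique {m : Fin n → ℤ} {a : ℕ} (ha : 0 < a) (hm : IsPrimitiveVec m)
    {v : Fin n → ℤ} (hv : v = (a : ℤ) • m) : cls v = m := by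
  have hv0 : v ≠ 0 := by
    rw [hv]
    intro h
    apply hm.1
    funext i
    have := congrFun h i
    simp only [Pi.smul_apply, smul_eq_mul, Pi.zero_apply] at this ⊢
    rcases mul_eq_zero.mp this with h' | h'
    · exact absurd (by exact_mod_cast h') ha.ne'
    · exact h'
  rw [cls, if_neg hv0]
  exact pp_unique ha hm hv

end DirFact

namespace DirFact
open scoped Classical
variable {K : Type} [Field K] {P : Type} [AddCommMonoid P]

noncomputable def aFilter (c : P → Prop) (x : AddMonoidAlgebra K P) : AddMonoidAlgebra K P :=
  AddMonoidAlgebra.ofCoeff (Finsupp.filter c x.coeff)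

lemma aFilter_apply (c : P → Prop) (x : AddMonoidAlgebra K P) (p : P) :
    (aFilter c x).coeff p = if c p then x.coeff p else 0 := by
  rw [aFilter, AddMonoidAlgebra.coeff_ofCoeff, Finsupp.filter_apply]

lemma aFilter_zero (c : P → Prop) : aFilter c (0 : AddMonoidAlgebra K P) = 0 := by
  rw [aFilter, AddMonoidAlgebra.coeff_zero, Finsupp.filter_zero]; rfl

lemma aFilter_add (c : P → Prop) (x y : AddMonoidAlgebra K P) :
    aFilter c (x + y) = aFilter c x + aFilter c y := by
  unfold aFilter
  rw [AddMonoidAlgebra.coeff_add, Finsupp.filter_add, AddMonoidAlgebra.ofCoeff_add]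

lemma aFilter_single (c : P → Prop) (p : P) (b : K) :
    aFilter c (AddMonoidAlgebra.single p b) =
      if c p then AddMonoidAlgebra.single p b else 0 := by
  by_cases h : c p
  · rw [if_pos h, aFilter]
    rw [AddMonoidAlgebra.coeff_single, Finsupp.filter_single_of_pos _ h, AddMonoidAlgebra.ofCoeff_single]
  · rw [if_neg h, aFilter]
    rw [AddMonoidAlgebra.coeff_single, Finsupp.filter_single_of_neg _ h, AddMonoidAlgebra.ofCoeff_zero]

lemma aFilter_sum {ι : Type} (c : P → Prop) (s : Finset ι) (g : ι → AddMonoidAlgebra K P) :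
    aFilter c (∑ i ∈ s, g i) = ∑ i ∈ s, aFilter c (g i) := by
  classical
  induction s using Finset.induction with
  | empty => simp [aFilter_zero]
  | insert _ _ ha ih =>
    rename_i a s
    rw [Finset.sum_insert ha, Finset.sum_insert ha, aFilter_add, ih]

lemma filter_mul_single (c : P → Prop) (x : AddMonoidAlgebra K P) (q : P) (b : K) :
    aFilter c (x * AddMonoidAlgebra.single q b) =
      aFilter (fun p => c (p + q)) x * AddMonoidAlgebra.single q b := by
  induction x using AddMonoidAlgebra.induction with
  | zero =>
    show aFilter c ((0 : AddMonoidAlgebra K P) * _) = aFilter _ (0 : AddMonoidAlgebra K P) * _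
    rw [zero_mul, aFilter_zero, aFilter_zero, zero_mul]
  | single_add p a rest _ _ ih =>
    show aFilter c ((AddMonoidAlgebra.single p a + (show AddMonoidAlgebra K P from rest)) * _)
      = aFilter _ (AddMonoidAlgebra.single p a + (show AddMonoidAlgebra K P from rest)) * _
    rw [add_mul, aFilter_add, aFilter_add, ih, add_mul,
      AddMonoidAlgebra.single_mul_single, aFilter_single, aFilter_single]
    congr 1
    by_cases h : c (p + q)
    · rw [if_pos h, if_pos h, AddMonoidAlgebra.single_mul_single]
    · rw [if_neg h, if_neg h, zero_mul]


lemma filter_mem_span_ideal {S : Set (AddMonoidAlgebra K P)}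
    (hS : ∀ s ∈ S, ∃ (p : P) (b : K), s = AddMonoidAlgebra.single p b)
    {x : AddMonoidAlgebra K P} (hx : x ∈ Ideal.span S)
    (c : P → Prop) :
    aFilter c x ∈ Ideal.span S := by
  revert c
  induction hx using Submodule.span_induction with
  | mem y hy =>
    intro c
    obtain ⟨p, b, rfl⟩ := hS y hy
    rw [aFilter_single]
    by_cases h : c p
    · rw [if_pos h]; exact Ideal.subset_span hy
    · rw [if_neg h]; exact Submodule.zero_mem _
  | zero => intro c; rw [aFilter_zero]; exact Submodule.zero_mem _
  | add y z hy hz ihy ihz =>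
    intro c
    rw [aFilter_add]
    exact Submodule.add_mem _ (ihy c) (ihz c)
  | smul a y hy ih =>
    intro c
    have hay : a • y = a * y := rfl
    have expand : a * y = ∑ q ∈ a.coeff.support, y * AddMonoidAlgebra.single q (a.coeff q) := by
      conv_lhs => rw [← AddMonoidAlgebra.sum_coeff_single a]
      rw [Finsupp.sum, Finset.sum_mul]
      exact Finset.sum_congr rfl (fun q _ => mul_comm _ _)
    rw [hay, expand, aFilter_sum]
    refine Submodule.sum_mem _ (fun q _ => ?_)
    rw [filter_mul_single c y q (a.coeff q)]
    exact Ideal.mul_mem_right _ _ (ih (fun p => c (p + q)))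

/-- the set of monomials with exponents in `A` -/
def MS (K : Type) [Field K] {P : Type} [AddCommMonoid P] (A : Set P) :
    Set (AddMonoidAlgebra K P) :=
  {x | ∃ p ∈ A, x = AddMonoidAlgebra.single p 1}

open Pointwise in
lemma MS_mul (A B : Set P) : MS K A * MS K B = MS K (A + B) := by
  ext x
  constructor
  · rintro ⟨y, ⟨p, hp, rfl⟩, z, ⟨q, hq, rfl⟩, rfl⟩
    refine ⟨p + q, Set.add_mem_add hp hq, ?_⟩
    show AddMonoidAlgebra.single p 1 * AddMonoidAlgebra.single q 1 = _
    rw [AddMonoidAlgebra.single_mul_single, one_mul]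
  · rintro ⟨w, ⟨p, hp, q, hq, rfl⟩, rfl⟩
    refine ⟨AddMonoidAlgebra.single p 1, ⟨p, hp, rfl⟩, AddMonoidAlgebra.single q 1,
      ⟨q, hq, rfl⟩, ?_⟩
    show AddMonoidAlgebra.single p 1 * AddMonoidAlgebra.single q 1 = _
    rw [AddMonoidAlgebra.single_mul_single, one_mul]

open Pointwise in
/-- exponent sets for powers of a monomial ideal -/
def VN {P : Type} [AddCommMonoid P] (NU : Set P) : ℕ → Set P
  | 0 => {0}
  | N + 1 => VN NU N + NU

lemma span_MS_pow (NU : Set P) (N : ℕ) :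
    (Ideal.span (MS K NU)) ^ N = Ideal.span (MS K (VN NU N)) := by
  induction N with
  | zero =>
    rw [pow_zero, VN]
    have : MS K ({0} : Set P) = {(1 : AddMonoidAlgebra K P)} := by
      ext x
      simp only [MS, Set.mem_setOf_eq, Set.mem_singleton_iff]
      constructor
      · rintro ⟨p, hp, rfl⟩
        rw [hp]
        exact AddMonoidAlgebra.one_def.symm
      · rintro rfl
        exact ⟨0, rfl, AddMonoidAlgebra.one_def⟩
    rw [this, Ideal.span_singleton_one, Ideal.one_eq_top]
  | succ N ih =>
    rw [pow_succ, ih, Ideal.span_mul_span', MS_mul]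
    rfl

lemma filter_mem_pow {NU : Set P} {mP : Ideal (AddMonoidAlgebra K P)}
    (hmP : mP = Ideal.span (MS K NU)) {N : ℕ} {x : AddMonoidAlgebra K P}
    (hx : x ∈ mP ^ N) (c : P → Prop) :
    aFilter c x ∈ mP ^ N := by
  rw [hmP, span_MS_pow] at hx ⊢
  refine filter_mem_span_ideal ?_ hx c
  rintro s ⟨p, _, rfl⟩
  exact ⟨p, 1, rfl⟩

lemma filter_mem {NU : Set P} {mP : Ideal (AddMonoidAlgebra K P)}
    (hmP : mP = Ideal.span (MS K NU)) {x : AddMonoidAlgebra K P}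
    (hx : x ∈ mP) (c : P → Prop) :
    aFilter c x ∈ mP := by
  have := filter_mem_pow hmP (N := 1) (by rwa [pow_one]) c
  rwa [pow_one] at this

/-- membership in the `K`-span of a set of monomials is equivalent to a support condition -/
lemma mem_span_iff_support (Q : P → Prop) (x : AddMonoidAlgebra K P) :
    x ∈ Submodule.span K {y : AddMonoidAlgebra K P |
        ∃ p : P, y = AddMonoidAlgebra.single p (1 : K) ∧ Q p} ↔
      ∀ p ∈ x.coeff.support, Q p := by
  constructor
  · intro hx
    induction hx using Submodule.span_induction with
    | mem y hy =>
      obtain ⟨p, rfl, hQ⟩ := hy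
      intro q hq
      have := Finsupp.support_single_subset hq
      rw [Finset.mem_singleton] at this
      rwa [this]
    | zero => simp
    | add y z hy hz ihy ihz =>
      intro p hp
      rcases Finset.mem_union.mp (Finsupp.support_add hp) with h | h
      · exact ihy p h
      · exact ihz p h
    | smul a y hy ih =>
      intro p hp
      exact ih p (Finsupp.support_smul hp)
  · intro h
    have : x = ∑ p ∈ x.coeff.support, (x.coeff p) • AddMonoidAlgebra.single p (1 : K) := by
      conv_lhs => rw [← AddMonoidAlgebra.sum_coeff_single x]
      rw [Finsupp.sum]
      refine Finset.sum_congr rfl (fun p _ => ?_)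
      rw [AddMonoidAlgebra.smul_single, smul_eq_mul, mul_one]
    rw [this]
    exact Submodule.sum_mem _ (fun p hp =>
      Submodule.smul_mem _ _ (Submodule.subset_span ⟨p, rfl, h p hp⟩))

lemma finsum_apply {ι : Type} (s : Finset ι) (g : ι → AddMonoidAlgebra K P) (p : P) :
    (∑ i ∈ s, g i).coeff p = ∑ i ∈ s, (g i).coeff p := by
  classical
  induction s using Finset.induction with
  | empty => rfl
  | insert _ _ ha ih =>
    rename_i a s
    rw [Finset.sum_insert ha, Finset.sum_insert ha, ← ih]
    rfl

/-- partition of a finsupp according to the fibers of `g` -/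
lemma sum_filter_classes {β : Type} [DecidableEq β] (g : P → β) (x : AddMonoidAlgebra K P) :
    ∑ b ∈ x.coeff.support.image g, aFilter (fun p => g p = b) x = x := by
  ext p
  rw [finsum_apply]
  by_cases hp : p ∈ x.coeff.support
  · rw [Finset.sum_eq_single_of_mem (g p) (Finset.mem_image_of_mem g hp)]
    · rw [aFilter_apply, if_pos rfl]
    · intro b _ hb
      rw [aFilter_apply, if_neg (fun h => hb h.symm)]
  · have hx0 : x.coeff p = 0 := Finsupp.notMem_support_iff.mp hp
    rw [hx0]
    refine Finset.sum_eq_zero (fun b _ => ?_)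
    rw [aFilter_apply]
    by_cases hc : g p = b
    · rw [if_pos hc, hx0]
    · rw [if_neg hc]

lemma filter_eq_self_of_support {c : P → Prop} {x : AddMonoidAlgebra K P}
    (h : ∀ p ∈ x.coeff.support, c p) : aFilter c x = x := by
  ext p
  rw [aFilter_apply]
  by_cases hp : p ∈ x.coeff.support
  · rw [if_pos (h p hp)]
  · by_cases hc : c p
    · rw [if_pos hc]
    · rw [if_neg hc, Finsupp.notMem_support_iff.mp hp]

lemma filter_eq_zero_of_support {c : P → Prop} {x : AddMonoidAlgebra K P}
    (h : ∀ p ∈ x.coeff.support, ¬ c p) : aFilter c x = 0 := by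
  ext p
  rw [aFilter_apply]
  have h0 : (0 : AddMonoidAlgebra K P).coeff p = 0 := rfl
  rw [h0]
  by_cases hp : p ∈ x.coeff.support
  · rw [if_neg (h p hp)]
  · by_cases hc : c p
    · rw [if_pos hc, Finsupp.notMem_support_iff.mp hp]
    · rw [if_neg hc]

lemma support_aFilter (c : P → Prop) (x : AddMonoidAlgebra K P) :
    (aFilter c x).coeff.support ⊆ x.coeff.support := by
  intro p hp
  rw [Finsupp.mem_support_iff] at hp ⊢
  rw [aFilter_apply] at hp
  intro hxp
  apply hp
  rw [hxp]
  exact ite_self 0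

section ProdExpand

variable {R : Type} [CommRing R] {ι : Type} [DecidableEq ι]

lemma prod_sub_one_mem (I : Ideal R) (t : Finset ι) (F : ι → R)
    (h : ∀ i ∈ t, F i - 1 ∈ I) : (∏ i ∈ t, F i) - 1 ∈ I := by
  induction t using Finset.induction with
  | empty => simp
  | insert _ _ ha ih =>
    rename_i a t
    rw [Finset.prod_insert ha]
    have key : F a * ∏ i ∈ t, F i - 1 = F a * ((∏ i ∈ t, F i) - 1) + (F a - 1) := by ring
    rw [key]
    exact Submodule.add_mem _
      (Ideal.mul_mem_left _ _ (ih (fun i hi => h i (Finset.mem_insert_of_mem hi))))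
      (h a (Finset.mem_insert_self a t))

lemma prod_expand (I : Ideal R) (N : ℕ) (t : Finset ι) (F δ : ι → R)
    (hF : ∀ i ∈ t, F i - 1 ∈ I) (hδ1 : ∀ i ∈ t, δ i ∈ I) (hδN : ∀ i ∈ t, δ i ∈ I ^ N) :
    (∏ i ∈ t, (F i + δ i)) - (∏ i ∈ t, F i) - (∑ i ∈ t, δ i) ∈ I ^ (N + 1) := by
  induction t using Finset.induction with
  | empty => simp
  | insert _ _ ha ih =>
    rename_i a t
    have hFt : ∀ i ∈ t, F i - 1 ∈ I := fun i hi => hF i (Finset.mem_insert_of_mem hi)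
    have hδ1t : ∀ i ∈ t, δ i ∈ I := fun i hi => hδ1 i (Finset.mem_insert_of_mem hi)
    have hδNt : ∀ i ∈ t, δ i ∈ I ^ N := fun i hi => hδN i (Finset.mem_insert_of_mem hi)
    have IH := ih hFt hδ1t hδNt
    rw [Finset.prod_insert ha, Finset.prod_insert ha, Finset.sum_insert ha]
    set A := ∏ i ∈ t, (F i + δ i) with hA
    set B := ∏ i ∈ t, F i with hB
    set S := ∑ i ∈ t, δ i with hS
    have key : (F a + δ a) * A - F a * B - (δ a + S) =
        F a * (A - B - S) + (F a - 1) * S + δ a * (A - 1) := by ring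
    rw [key]
    refine Submodule.add_mem _ (Submodule.add_mem _ ?_ ?_) ?_
    · exact Ideal.mul_mem_left _ _ IH
    · have hSI : S ∈ I ^ N := Submodule.sum_mem _ hδNt
      have := Ideal.mul_mem_mul (hF a (Finset.mem_insert_self a t)) hSI
      rwa [← pow_succ'] at this
    · have hA1 : A - 1 ∈ I := by
        refine prod_sub_one_mem I t (fun i => F i + δ i) (fun i hi => ?_)
        have key2 : F i + δ i - 1 = (F i - 1) + δ i := by ring
        rw [key2]
        exact Submodule.add_mem _ (hFt i hi) (hδ1t i hi)
      have := Ideal.mul_mem_mul (hδN a (Finset.mem_insert_self a t)) hA1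
      rwa [← pow_succ] at this

end ProdExpand

end DirFact

namespace DirFact

open scoped Classical

variable {n : ℕ} {K P : Type} [Field K] [AddCommMonoid P]

/-- the direction class of an exponent -/
noncomputable def clP (r : P →+ (Fin n → ℤ)) (p : P) : Fin n → ℤ := cls (r p)

lemma clP_class (r : P →+ (Fin n → ℤ)) (p : P) :
    clP r p = 0 ∨ IsPrimitiveVec (clP r p) := cls_class (r p)

lemma clP_add (r : P →+ (Fin n → ℤ)) {m : Fin n → ℤ} {p q : P}
    (hp : clP r p = m) (hq : clP r q = m) : clP r (p + q) = m := by
  by_cases hm : m = 0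
  · subst hm
    rw [clP, cls_eq_zero_iff] at hp hq ⊢
    rw [map_add, hp, hq, add_zero]
  · have hprim : IsPrimitiveVec m := by
      rcases clP_class r p with h | h
      · exact absurd (hp ▸ h) hm
      · exact hp ▸ h
    have hp0 : r p ≠ 0 := by
      intro h0
      apply hm
      rw [← hp, clP, h0, cls_zero]
    have hq0 : r q ≠ 0 := by
      intro h0
      apply hm
      rw [← hq, clP, h0, cls_zero]
    obtain ⟨a, ha, hra⟩ := cls_smul (r p) hp0
    obtain ⟨b, hb, hrb⟩ := cls_smul (r q) hq0
    rw [clP] at hp hq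
    rw [hp] at hra
    rw [hq] at hrb
    have : r (p + q) = ((a + b : ℕ) : ℤ) • m := by
      rw [map_add, hra, hrb, ← add_smul]
      push_cast
      ring_nf
    exact cls_unique (by omega) hprim this

lemma clP_to_Q (r : P →+ (Fin n → ℤ)) {m : Fin n → ℤ} {p : P} (h : clP r p = m) :
    (m = 0 → r p = 0) ∧ (m ≠ 0 → ∃ a : ℕ, 0 < a ∧ r p = (a : ℤ) • m) := by
  constructor
  · rintro rfl
    rwa [clP, cls_eq_zero_iff] at h
  · intro hm
    have hp0 : r p ≠ 0 := by
      intro h0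
      apply hm
      rw [← h, clP, h0, cls_zero]
    obtain ⟨a, ha, hra⟩ := cls_smul (r p) hp0
    rw [clP] at h
    exact ⟨a, ha, h ▸ hra⟩

lemma Q_to_clP (r : P →+ (Fin n → ℤ)) {m : Fin n → ℤ} (hm : m = 0 ∨ IsPrimitiveVec m) {p : P}
    (hQ : (m = 0 → r p = 0) ∧ (m ≠ 0 → ∃ a : ℕ, 0 < a ∧ r p = (a : ℤ) • m)) :
    clP r p = m := by
  rcases hm with rfl | hprim
  · rw [clP, hQ.1 rfl, cls_zero]
  · obtain ⟨a, ha, hra⟩ := hQ.2 hprim.1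
    exact cls_unique ha hprim hra

lemma eq_zero_of_support_empty (x : AddMonoidAlgebra K P) (h : ∀ p ∈ x.coeff.support, False) :
    x = 0 := by
  ext p
  by_cases hp : p ∈ x.coeff.support
  · exact absurd hp (fun hp => h p hp)
  · rw [Finsupp.notMem_support_iff.mp hp]
    rfl

/-- the recursive construction of the directional factorization -/
noncomputable def famAux (f : ℕ → AddMonoidAlgebra K P) (cl : P → (Fin n → ℤ)) :
    ℕ → Finset (Fin n → ℤ) × ((Fin n → ℤ) → AddMonoidAlgebra K P)
  | 0 => (∅, fun _ => 1)
  | N + 1 =>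
    let prev := famAux f cl N
    let e := f (N + 1) - ∏ m ∈ prev.1, prev.2 m
    (prev.1 ∪ (e.coeff.support.image cl),
      fun m => prev.2 m * (1 + aFilter (fun p => cl p = m) e))

lemma famAux_invariants (r : P →+ (Fin n → ℤ)) (mP : Ideal (AddMonoidAlgebra K P))
    (hmP : mP = Ideal.span (MS K {p : P | ¬ IsAddUnit p}))
    (f : ℕ → AddMonoidAlgebra K P)
    (hf : ∀ N N', N ≤ N' → f N' - f N ∈ mP ^ N)
    (hf1 : ∀ N, f N - 1 ∈ mP) (N : ℕ) :
    (∀ m ∉ (famAux f (clP r) N).1, (famAux f (clP r) N).2 m = 1) ∧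
    (∀ m, ∀ p ∈ ((famAux f (clP r) N).2 m - 1).coeff.support, clP r p = m) ∧
    (∀ m, (famAux f (clP r) N).2 m - 1 ∈ mP) ∧
    (f N - ∏ m ∈ (famAux f (clP r) N).1, (famAux f (clP r) N).2 m ∈ mP ^ N) := by
  classical
  induction N with
  | zero =>
    refine ⟨fun m _ => rfl, fun m p hp => ?_, fun m => ?_, ?_⟩
    · simp only [famAux, sub_self, AddMonoidAlgebra.coeff_zero, Finsupp.support_zero] at hp
      exact absurd hp (Finset.notMem_empty p)
    · show (1 : AddMonoidAlgebra K P) - 1 ∈ mP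
      rw [sub_self]
      exact Submodule.zero_mem _
    · rw [pow_zero, Ideal.one_eq_top]
      exact Submodule.mem_top
  | succ N IH =>
    obtain ⟨I1, I2, I3, I4⟩ := IH
    set s := (famAux f (clP r) N).1 with hs
    set G := (famAux f (clP r) N).2 with hG
    set e := f (N + 1) - ∏ m ∈ s, G m with he
    have hfam : famAux f (clP r) (N + 1) =
        (s ∪ (e.coeff.support.image (clP r)),
          fun m => G m * (1 + aFilter (fun p => clP r p = m) e)) := by
      rw [famAux]
    have heN : e ∈ mP ^ N := by
      have h1 : f (N + 1) - f N ∈ mP ^ N := hf N (N + 1) (by omega)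
      have h2 : e = (f (N + 1) - f N) + (f N - ∏ m ∈ s, G m) := by rw [he]; ring
      rw [h2]
      exact Submodule.add_mem _ h1 I4
    have he1 : e ∈ mP := by
      have h2 : e = (f (N + 1) - 1) - ((∏ m ∈ s, G m) - 1) := by rw [he]; ring
      rw [h2]
      exact Submodule.sub_mem _ (hf1 (N + 1)) (prod_sub_one_mem mP s G (fun m _ => I3 m))
    have hflt1 : ∀ m, aFilter (fun p => clP r p = m) e ∈ mP :=
      fun m => filter_mem hmP he1 _
    have hfltN : ∀ m, aFilter (fun p => clP r p = m) e ∈ mP ^ N :=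
      fun m => filter_mem_pow hmP heN _
    have hδ : ∀ m, G m * (1 + aFilter (fun p => clP r p = m) e) =
        G m + G m * aFilter (fun p => clP r p = m) e := by
      intro m; ring
    refine ⟨?_, ?_, ?_, ?_⟩
    · -- I1 at N+1
      intro m hm
      rw [hfam] at hm ⊢
      simp only [Finset.mem_union, not_or] at hm
      have h1 : G m = 1 := I1 m hm.1
      have h2 : aFilter (fun p => clP r p = m) e = 0 := by
        refine filter_eq_zero_of_support (fun p hp => ?_)
        intro hcl
        exact hm.2 (hcl ▸ Finset.mem_image_of_mem (clP r) hp)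
      show G m * (1 + aFilter (fun p => clP r p = m) e) = 1
      rw [h1, h2, add_zero, one_mul]
    · -- I2 at N+1
      intro m p hp
      rw [hfam] at hp
      have hexp : G m * (1 + aFilter (fun p => clP r p = m) e) - 1 =
          (G m - 1) + aFilter (fun p => clP r p = m) e +
            (G m - 1) * aFilter (fun p => clP r p = m) e := by ring
      show clP r p = m
      have hp' : p ∈ ((G m - 1) + aFilter (fun p => clP r p = m) e +
          (G m - 1) * aFilter (fun p => clP r p = m) e).coeff.support := by
        rw [← hexp]
        exact hp
      rcases Finset.mem_union.mp (Finsupp.support_add hp') with h | h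
      · rcases Finset.mem_union.mp (Finsupp.support_add h) with h' | h'
        · exact I2 m p h'
        · have := support_aFilter (fun p => clP r p = m) e h'
          have h2 : (aFilter (fun p => clP r p = m) e).coeff p ≠ 0 := Finsupp.mem_support_iff.mp h'
          rw [aFilter_apply] at h2
          by_contra hc
          rw [if_neg hc] at h2
          exact h2 rfl
      · have := AddMonoidAlgebra.support_coeff_mul_subset _ _ h
        rw [Finset.mem_add] at this
        obtain ⟨p1, hp1, p2, hp2, rfl⟩ := this
        have hc1 : clP r p1 = m := I2 m p1 hp1
        have hc2 : clP r p2 = m := by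
          have h2 := Finsupp.mem_support_iff.mp hp2
          rw [aFilter_apply] at h2
          by_contra hc
          rw [if_neg hc] at h2
          exact h2 rfl
        exact clP_add r hc1 hc2
    · -- I3 at N+1
      intro m
      rw [hfam]
      show G m * (1 + aFilter (fun p => clP r p = m) e) - 1 ∈ mP
      have hexp : G m * (1 + aFilter (fun p => clP r p = m) e) - 1 =
          (G m - 1) + G m * aFilter (fun p => clP r p = m) e := by ring
      rw [hexp]
      exact Submodule.add_mem _ (I3 m) (Ideal.mul_mem_left _ _ (hflt1 m))
    · -- I4 at N+1
      rw [hfam]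
      show f (N + 1) - ∏ m ∈ s ∪ e.coeff.support.image (clP r),
          G m * (1 + aFilter (fun p => clP r p = m) e) ∈ mP ^ (N + 1)
      set t := s ∪ e.coeff.support.image (clP r) with ht
      set δ := fun m => G m * aFilter (fun p => clP r p = m) e with hδdef
      have hkey := prod_expand (mP) N t G δ (fun m _ => I3 m)
        (fun m _ => Ideal.mul_mem_left _ _ (hflt1 m))
        (fun m _ => Ideal.mul_mem_left _ _ (hfltN m))
      have hGδ : ∀ m, G m * (1 + aFilter (fun p => clP r p = m) e) = G m + δ m := by
        intro m; rw [hδdef]; ring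
      have hprod_eq : ∏ m ∈ t, G m * (1 + aFilter (fun p => clP r p = m) e) =
          ∏ m ∈ t, (G m + δ m) := Finset.prod_congr rfl (fun m _ => hGδ m)
      have hprodG : ∏ m ∈ t, G m = ∏ m ∈ s, G m := by
        refine (Finset.prod_subset Finset.subset_union_left (fun m _ hm => I1 m hm)).symm
      have hsumflt : ∑ m ∈ t, aFilter (fun p => clP r p = m) e = e := by
        have h1 : ∑ m ∈ e.coeff.support.image (clP r), aFilter (fun p => clP r p = m) e
            = ∑ m ∈ t, aFilter (fun p => clP r p = m) e := by
          refine Finset.sum_subset Finset.subset_union_right (fun m _ hm => ?_)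
          refine filter_eq_zero_of_support (fun p hp hcl => ?_)
          exact hm (hcl ▸ Finset.mem_image_of_mem (clP r) hp)
        rw [← h1, sum_filter_classes]
      have hsumδ : (∑ m ∈ t, δ m) - e ∈ mP ^ (N + 1) := by
        have : (∑ m ∈ t, δ m) - e = ∑ m ∈ t, (δ m - aFilter (fun p => clP r p = m) e) := by
          rw [Finset.sum_sub_distrib, hsumflt]
        rw [this]
        refine Submodule.sum_mem _ (fun m _ => ?_)
        have : δ m - aFilter (fun p => clP r p = m) e =
            (G m - 1) * aFilter (fun p => clP r p = m) e := by rw [hδdef]; ring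
        rw [this]
        have := Ideal.mul_mem_mul (I3 m) (hfltN m)
        rwa [← pow_succ'] at this
      -- assemble
      have hfe : f (N + 1) = (∏ m ∈ s, G m) + e := by rw [he]; ring
      have final : f (N + 1) - ∏ m ∈ t, G m * (1 + aFilter (fun p => clP r p = m) e) =
          -(((∏ m ∈ t, (G m + δ m)) - (∏ m ∈ t, G m) - ∑ m ∈ t, δ m))
            - ((∑ m ∈ t, δ m) - e) := by
        rw [hprod_eq, hfe, hprodG]
        ring
      rw [final]
      exact Submodule.sub_mem _ (Submodule.neg_mem _ hkey) hsumδ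

end DirFact

/-- `F` is a directional factorization of the element of the `mP`-adic completion of `k[P]`
represented by the compatible sequence `f`: each `F m` is a compatible sequence (an element of
the completion) which is `≡ 1 mod mP`, all of whose monomials `z^p` (other than the constant
term) have `r p` positively proportional to `m` (or `r p = 0` when `m = 0`); `F m` is trivial
unless `m = 0` or `m` is primitive, and the product of the `F m` converges to `f`: modulo each
power `mP ^ N` only finitely many factors are nontrivial and their product is `≡ f`. -/
def IsDirectionalFactorization {n : ℕ} (K P : Type) [Field K] [AddCommMonoid P]
    (r : P →+ (Fin n → ℤ)) (mP : Ideal (AddMonoidAlgebra K P))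
    (f : ℕ → AddMonoidAlgebra K P) (F : (Fin n → ℤ) → ℕ → AddMonoidAlgebra K P) : Prop :=
  (∀ m N N', N ≤ N' → F m N' - F m N ∈ mP ^ N) ∧
  (∀ m N, F m N - 1 ∈ mP) ∧
  (∀ m N, F m N - 1 ∈ Submodule.span K
      {x | ∃ p : P, x = AddMonoidAlgebra.single p (1 : K) ∧
        (m = 0 → r p = 0) ∧ (m ≠ 0 → ∃ a : ℕ, 0 < a ∧ r p = (a : ℤ) • m)}) ∧
  (∀ m, ¬ (m = 0 ∨ IsPrimitiveVec m) → ∀ N, F m N - 1 ∈ mP ^ N) ∧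
  (∀ N : ℕ, ∃ s : Finset (Fin n → ℤ),
      (∀ m, m ∉ s → F m N - 1 ∈ mP ^ N) ∧
      f N - ∏ m ∈ s, F m N ∈ mP ^ N)

namespace DirFact

open scoped Classical

lemma unique_aux {n : ℕ} {K P : Type} [Field K] [AddCommMonoid P]
    (r : P →+ (Fin n → ℤ)) (mP : Ideal (AddMonoidAlgebra K P))
    (hmP' : mP = Ideal.span (MS K {p : P | ¬ IsAddUnit p}))
    (f : ℕ → AddMonoidAlgebra K P)
    (F F' : (Fin n → ℤ) → ℕ → AddMonoidAlgebra K P)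
    (hF : IsDirectionalFactorization K P r mP f F)
    (hF' : IsDirectionalFactorization K P r mP f F') :
    ∀ N m, F m N - F' m N ∈ mP ^ N := by
  obtain ⟨hc1, hc2, hc3, hc4, hc5⟩ := hF
  obtain ⟨hc1', hc2', hc3', hc4', hc5'⟩ := hF'
  intro N
  induction N with
  | zero =>
    intro m
    rw [pow_zero, Ideal.one_eq_top]
    exact Submodule.mem_top
  | succ N IH =>
    intro m
    set δ : (Fin n → ℤ) → AddMonoidAlgebra K P :=
      fun m' => F' m' (N + 1) - F m' (N + 1) with hδdef
    have hδN : ∀ m', δ m' ∈ mP ^ N := by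
      intro m'
      have h1 : F m' (N + 1) - F m' N ∈ mP ^ N := hc1 m' N (N + 1) (by omega)
      have h2 : F' m' (N + 1) - F' m' N ∈ mP ^ N := hc1' m' N (N + 1) (by omega)
      have h3 : F m' N - F' m' N ∈ mP ^ N := IH m'
      have heq : δ m' = (F' m' (N + 1) - F' m' N) - (F m' (N + 1) - F m' N)
          - (F m' N - F' m' N) := by rw [hδdef]; ring
      rw [heq]
      exact Submodule.sub_mem _ (Submodule.sub_mem _ h2 h1) h3
    have hδ1 : ∀ m', δ m' ∈ mP := by
      intro m'
      have heq : δ m' = (F' m' (N + 1) - 1) - (F m' (N + 1) - 1) := by rw [hδdef]; ring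
      rw [heq]
      exact Submodule.sub_mem _ (hc2' m' (N + 1)) (hc2 m' (N + 1))
    have hδNplus : ∀ m', ¬ (m' = 0 ∨ IsPrimitiveVec m') → δ m' ∈ mP ^ (N + 1) := by
      intro m' hm'
      have heq : δ m' = (F' m' (N + 1) - 1) - (F m' (N + 1) - 1) := by rw [hδdef]; ring
      rw [heq]
      exact Submodule.sub_mem _ (hc4' m' hm' (N + 1)) (hc4 m' hm' (N + 1))
    obtain ⟨s, hs1, hs2⟩ := hc5 (N + 1)
    obtain ⟨s', hs1', hs2'⟩ := hc5' (N + 1)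
    set t := s ∪ s' with htdef
    have hprodF : (∏ m' ∈ t, F m' (N + 1)) - f (N + 1) ∈ mP ^ (N + 1) := by
      have h1 : (∏ m' ∈ t \ s, F m' (N + 1)) * ∏ m' ∈ s, F m' (N + 1)
          = ∏ m' ∈ t, F m' (N + 1) := Finset.prod_sdiff Finset.subset_union_left
      have h2 : (∏ m' ∈ t \ s, F m' (N + 1)) - 1 ∈ mP ^ (N + 1) :=
        prod_sub_one_mem _ _ _ (fun m' hm' => hs1 m' (Finset.mem_sdiff.mp hm').2)
      have heq : (∏ m' ∈ t, F m' (N + 1)) - f (N + 1) =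
          ((∏ m' ∈ t \ s, F m' (N + 1)) - 1) * (∏ m' ∈ s, F m' (N + 1))
            - (f (N + 1) - ∏ m' ∈ s, F m' (N + 1)) := by
        rw [← h1]; ring
      rw [heq]
      exact Submodule.sub_mem _ (Ideal.mul_mem_right _ _ h2) hs2
    have hprodF' : (∏ m' ∈ t, F' m' (N + 1)) - f (N + 1) ∈ mP ^ (N + 1) := by
      have h1 : (∏ m' ∈ t \ s', F' m' (N + 1)) * ∏ m' ∈ s', F' m' (N + 1)
          = ∏ m' ∈ t, F' m' (N + 1) := Finset.prod_sdiff Finset.subset_union_right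
      have h2 : (∏ m' ∈ t \ s', F' m' (N + 1)) - 1 ∈ mP ^ (N + 1) :=
        prod_sub_one_mem _ _ _ (fun m' hm' => hs1' m' (Finset.mem_sdiff.mp hm').2)
      have heq : (∏ m' ∈ t, F' m' (N + 1)) - f (N + 1) =
          ((∏ m' ∈ t \ s', F' m' (N + 1)) - 1) * (∏ m' ∈ s', F' m' (N + 1))
            - (f (N + 1) - ∏ m' ∈ s', F' m' (N + 1)) := by
        rw [← h1]; ring
      rw [heq]
      exact Submodule.sub_mem _ (Ideal.mul_mem_right _ _ h2) hs2'
    have hkey := prod_expand mP N t (fun m' => F m' (N + 1)) δ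
      (fun m' _ => hc2 m' (N + 1)) (fun m' _ => hδ1 m') (fun m' _ => hδN m')
    have hFδ : ∏ m' ∈ t, (F m' (N + 1) + δ m') = ∏ m' ∈ t, F' m' (N + 1) :=
      Finset.prod_congr rfl (fun m' _ => by rw [hδdef]; ring)
    have hsum : ∑ m' ∈ t, δ m' ∈ mP ^ (N + 1) := by
      have heq : ∑ m' ∈ t, δ m' =
          ((∏ m' ∈ t, F' m' (N + 1)) - f (N + 1))
            - ((∏ m' ∈ t, F m' (N + 1)) - f (N + 1))
            - ((∏ m' ∈ t, (F m' (N + 1) + δ m')) - (∏ m' ∈ t, F m' (N + 1))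
                - ∑ m' ∈ t, δ m') := by
        rw [hFδ]; ring
      rw [heq]
      exact Submodule.sub_mem _ (Submodule.sub_mem _ hprodF' hprodF) hkey
    -- the class-supported part of the sum
    set tc := t.filter (fun m' => m' = 0 ∨ IsPrimitiveVec m') with htc
    have hW : ∑ m' ∈ tc, δ m' ∈ mP ^ (N + 1) := by
      have hsplit := Finset.sum_filter_add_sum_filter_not t
        (fun m' => m' = 0 ∨ IsPrimitiveVec m') δ
      have heq : ∑ m' ∈ tc, δ m' = (∑ m' ∈ t, δ m')
          - ∑ m' ∈ t.filter (fun m' => ¬ (m' = 0 ∨ IsPrimitiveVec m')), δ m' := by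
        rw [← hsplit, htc]; ring
      rw [heq]
      refine Submodule.sub_mem _ hsum (Submodule.sum_mem _ (fun m' hm' => ?_))
      exact hδNplus m' (Finset.mem_filter.mp hm').2
    have hsupp : ∀ m', (m' = 0 ∨ IsPrimitiveVec m') →
        ∀ p ∈ (δ m').coeff.support, clP r p = m' := by
      intro m' hm' p hp
      have heq : δ m' = (F' m' (N + 1) - 1) - (F m' (N + 1) - 1) := by rw [hδdef]; ring
      rw [heq] at hp
      have hQ1 := (mem_span_iff_support _ _).mp (hc3' m' (N + 1))
      have hQ2 := (mem_span_iff_support _ _).mp (hc3 m' (N + 1))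
      rcases Finset.mem_union.mp (Finsupp.support_sub hp) with h | h
      · exact Q_to_clP r hm' (hQ1 p h)
      · exact Q_to_clP r hm' (hQ2 p h)
    by_cases hcl : m = 0 ∨ IsPrimitiveVec m
    · by_cases hmt : m ∈ t
      · have hmtc : m ∈ tc := Finset.mem_filter.mpr ⟨hmt, hcl⟩
        have hfilt : aFilter (fun p => clP r p = m) (∑ m' ∈ tc, δ m') = δ m := by
          rw [aFilter_sum]
          rw [Finset.sum_eq_single_of_mem m hmtc]
          · exact filter_eq_self_of_support (hsupp m hcl)
          · intro m' hm' hne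
            refine filter_eq_zero_of_support (fun p hp hclm => ?_)
            have := hsupp m' (Finset.mem_filter.mp hm').2 p hp
            exact hne (hclm ▸ this.symm ▸ rfl)
        have : δ m ∈ mP ^ (N + 1) := by
          rw [← hfilt]
          exact filter_mem_pow hmP' hW _
        have heq : F m (N + 1) - F' m (N + 1) = -(δ m) := by rw [hδdef]; ring
        rw [heq]
        exact Submodule.neg_mem _ this
      · have h1 : F m (N + 1) - 1 ∈ mP ^ (N + 1) :=
          hs1 m (fun h => hmt (Finset.mem_union_left _ h))
        have h2 : F' m (N + 1) - 1 ∈ mP ^ (N + 1) :=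
          hs1' m (fun h => hmt (Finset.mem_union_right _ h))
        have heq : F m (N + 1) - F' m (N + 1)
            = (F m (N + 1) - 1) - (F' m (N + 1) - 1) := by ring
        rw [heq]
        exact Submodule.sub_mem _ h1 h2
    · have heq : F m (N + 1) - F' m (N + 1) = -(δ m) := by rw [hδdef]; ring
      rw [heq]
      exact Submodule.neg_mem _ (hδNplus m hcl)

end DirFact


/-- Lemma (unique product factorization): if `f` is an element of the completion of `k[P]` with
respect to the ideal `mP` generated by non-unit monomials, and `f ≡ 1 mod mP`, then `f` admits a
product expansion `f = ∏_{m ∈ M_prim ∪ {0}} f_m`, unique in the sense that any two such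
factorizations agree modulo every power of `mP`. -/
theorem unique_directional_factorization {n : ℕ} (K P : Type) [Field K] [CharZero K]
    [AddCommMonoid P] (r : P →+ (Fin n → ℤ))
    (mP : Ideal (AddMonoidAlgebra K P))
    (hmP : mP = Ideal.span {x | ∃ p : P, ¬ IsAddUnit p ∧ x = AddMonoidAlgebra.single p (1 : K)})
    (f : ℕ → AddMonoidAlgebra K P)
    (hf : ∀ N N', N ≤ N' → f N' - f N ∈ mP ^ N)
    (hf1 : ∀ N, f N - 1 ∈ mP) :
    ∃ F : (Fin n → ℤ) → ℕ → AddMonoidAlgebra K P,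
      IsDirectionalFactorization K P r mP f F ∧
      ∀ F' : (Fin n → ℤ) → ℕ → AddMonoidAlgebra K P,
        IsDirectionalFactorization K P r mP f F' →
        ∀ m N, F m N - F' m N ∈ mP ^ N := by
  classical
  open DirFact in
  have hmP' : mP = Ideal.span (DirFact.MS K {p : P | ¬ IsAddUnit p}) := by
    rw [hmP]
    rfl
  set cl := DirFact.clP r with hcl
  set F : (Fin n → ℤ) → ℕ → AddMonoidAlgebra K P :=
    fun m N => (DirFact.famAux f cl N).2 m with hFdef
  have hinv := fun N => DirFact.famAux_invariants r mP hmP' f hf hf1 N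
  -- one-step Cauchy property
  have hstep : ∀ k m, F m (k + 1) - F m k ∈ mP ^ k := by
    intro k m
    obtain ⟨I1, I2, I3, I4⟩ := hinv k
    set s := (DirFact.famAux f cl k).1 with hs
    set G := (DirFact.famAux f cl k).2 with hG
    set e := f (k + 1) - ∏ m' ∈ s, G m' with he
    have heN : e ∈ mP ^ k := by
      have h1 : f (k + 1) - f k ∈ mP ^ k := hf k (k + 1) (by omega)
      have h2 : e = (f (k + 1) - f k) + (f k - ∏ m' ∈ s, G m') := by rw [he]; ring
      rw [h2]
      exact Submodule.add_mem _ h1 I4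
    have hfam : DirFact.famAux f cl (k + 1) =
        (s ∪ (e.coeff.support.image cl),
          fun m => G m * (1 + DirFact.aFilter (fun p => cl p = m) e)) := by
      rw [DirFact.famAux]
    have heq : F m (k + 1) - F m k
        = G m * DirFact.aFilter (fun p => cl p = m) e := by
      rw [hFdef]
      show (DirFact.famAux f cl (k + 1)).2 m - G m = _
      rw [hfam]
      show G m * (1 + DirFact.aFilter (fun p => cl p = m) e) - G m = _
      ring
    rw [heq]
    exact Ideal.mul_mem_left _ _ (DirFact.filter_mem_pow hmP' heN _)
  have hcauchy : ∀ m N N', N ≤ N' → F m N' - F m N ∈ mP ^ N := by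
    intro m N N' hNN'
    induction N' with
    | zero =>
      have : N = 0 := by omega
      subst this
      rw [sub_self, pow_zero, Ideal.one_eq_top]
      exact Submodule.mem_top
    | succ N'' IH =>
      by_cases h : N ≤ N''
      · have h1 := IH h
        have h2 : F m (N'' + 1) - F m N'' ∈ mP ^ N'' := hstep N'' m
        have h3 : F m (N'' + 1) - F m N'' ∈ mP ^ N :=
          Ideal.pow_le_pow_right h h2
        have heq : F m (N'' + 1) - F m N
            = (F m (N'' + 1) - F m N'') + (F m N'' - F m N) := by ring
        rw [heq]
        exact Submodule.add_mem _ h3 h1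
      · have : N = N'' + 1 := by omega
        subst this
        rw [sub_self]
        exact Submodule.zero_mem _
  have hFact : IsDirectionalFactorization K P r mP f F := by
    refine ⟨hcauchy, ?_, ?_, ?_, ?_⟩
    · intro m N
      exact (hinv N).2.2.1 m
    · intro m N
      rw [DirFact.mem_span_iff_support]
      intro p hp
      have hclp : cl p = m := (hinv N).2.1 m p hp
      exact DirFact.clP_to_Q r hclp
    · intro m hm N
      have hzero : F m N - 1 = 0 := by
        refine DirFact.eq_zero_of_support_empty _ (fun p hp => ?_)
        have hclp : cl p = m := (hinv N).2.1 m p hp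
        exact hm (hclp ▸ DirFact.clP_class r p)
      rw [hzero]
      exact Submodule.zero_mem _
    · intro N
      refine ⟨(DirFact.famAux f cl N).1, fun m hm => ?_, (hinv N).2.2.2⟩
      have h1 : F m N = 1 := (hinv N).1 m hm
      rw [h1, sub_self]
      exact Submodule.zero_mem _
  refine ⟨F, hFact, fun F' hF' m N => ?_⟩
  exact DirFact.unique_aux r mP hmP' f F F' hFact hF' N m
end

section
/- Let T be a tropical hypersurface in M_ℝ = ℝ^n, i.e., a fan whose support is pure dimension n−1 with positive integer weights w_σ on the (n−1)-dimensional cones satisfying the balancing condition. Fix a primitive m₀ ∈ M, an element f₀ of a completed monoid algebra with log f₀ supported on monomials projecting to positive multiples of m₀, and form the associated widget 𝔇_{m₀} of walls (π^{-1}(σ), f₀^{w_σ}). Then for any loop γ around a codimension-two locus π^{-1}(τ) (τ ∈ T of dimension n−2) avoiding the singular locus, the path-ordered product θ_{γ, 𝔇_{m₀}} is the identity automorphism. -/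
/-- Widget consistency (Lemma `widgetlemma`): consider the widget associated to a tropical
hypersurface: the walls containing the codimension-two locus `π⁻¹(τ)` are
`π⁻¹(σ₁), …, π⁻¹(σ_p)`, carrying wall functions `f₀^{w_i}`, where `f₀` is supported on
monomials `z^{a·m₀}` (a power series in `z^{m₀}`), the primitive covectors `n_i` annihilate
`m₀`, and the balancing condition `Σ_i w_i n_i = 0` holds.  Each wall crossing is the algebra
automorphism `z^m ↦ (f₀^{w_i})^{⟨n_i, m⟩} z^m` of the group algebra `R[ℤ^d]`, and the
path-ordered product of all the crossings around a loop `γ` about `π⁻¹(τ)` is the identity. -/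
theorem widget_path_ordered_product_eq_id (R : Type) [CommRing R] (d p : ℕ)
    (m₀ : Fin d → ℤ)
    (F : (AddMonoidAlgebra R (Fin d → ℤ))ˣ)
    (hF : ∃ (K : ℕ) (c : ℕ → R),
      (F : AddMonoidAlgebra R (Fin d → ℤ)) =
        ∑ a ∈ Finset.range K, AddMonoidAlgebra.single ((a : ℤ) • m₀) (c a))
    (w : Fin p → ℕ) (hw : ∀ i, 0 < w i)
    (nn : Fin p → ((Fin d → ℤ) →+ ℤ))
    (hperp : ∀ i, nn i m₀ = 0)
    (hbal : ∀ m : Fin d → ℤ, ∑ i, (w i : ℤ) * nn i m = 0) :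
    (List.ofFn (fun i : Fin p =>
      (AddMonoidAlgebra.lift R (AddMonoidAlgebra R (Fin d → ℤ)) (Fin d → ℤ))
        (((Units.coeHom (AddMonoidAlgebra R (Fin d → ℤ))).comp
            ((zpowersHom (AddMonoidAlgebra R (Fin d → ℤ))ˣ (F ^ (w i))).comp
              (AddMonoidHom.toMultiplicative (nn i)))) *
          AddMonoidAlgebra.of R (Fin d → ℤ)))).foldr
        AlgHom.comp (AlgHom.id R (AddMonoidAlgebra R (Fin d → ℤ)))
      = AlgHom.id R (AddMonoidAlgebra R (Fin d → ℤ)) := by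
  set θ : Fin p → ((AddMonoidAlgebra R (Fin d → ℤ)) →ₐ[R] (AddMonoidAlgebra R (Fin d → ℤ))) := fun i =>
      (AddMonoidAlgebra.lift R (AddMonoidAlgebra R (Fin d → ℤ)) (Fin d → ℤ))
        (((Units.coeHom (AddMonoidAlgebra R (Fin d → ℤ))).comp
            ((zpowersHom (AddMonoidAlgebra R (Fin d → ℤ))ˣ (F ^ (w i))).comp
              (AddMonoidHom.toMultiplicative (nn i)))) *
          AddMonoidAlgebra.of R (Fin d → ℤ)) with hθ
  -- action on monomials
  have hsingle : ∀ (i : Fin p) (m : Fin d → ℤ) (r : R),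
      θ i (AddMonoidAlgebra.single m r)
        = ↑(F ^ ((w i : ℤ) * nn i m)) * AddMonoidAlgebra.single m r := by
    intro i m r
    rw [hθ]
    simp only [AddMonoidAlgebra.lift_single, MonoidHom.mul_apply, MonoidHom.coe_comp,
      Function.comp_apply, Units.coeHom_apply, zpowersHom_apply,
      AddMonoidHom.toMultiplicative_apply_apply, AddMonoidAlgebra.of_apply,
      toAdd_ofAdd]
    rw [← mul_smul_comm, AddMonoidAlgebra.smul_single', mul_one,
      ← zpow_natCast F (w i), ← zpow_mul]
  -- θ i fixes powers of F
  have hfixF : ∀ (i : Fin p), θ i (F : (AddMonoidAlgebra R (Fin d → ℤ))) = (F : (AddMonoidAlgebra R (Fin d → ℤ))) := by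
    intro i
    obtain ⟨K, c, hc⟩ := hF
    rw [hc, map_sum]
    refine Finset.sum_congr rfl fun a _ => ?_
    rw [hsingle]
    have : nn i ((a : ℤ) • m₀) = 0 := by
      rw [map_zsmul, hperp, smul_zero]
    rw [this, mul_zero, zpow_zero, Units.val_one, one_mul]
  have hfix : ∀ (i : Fin p) (z : ℤ), θ i ((F ^ z : (AddMonoidAlgebra R (Fin d → ℤ))ˣ) : (AddMonoidAlgebra R (Fin d → ℤ))) = ((F ^ z : (AddMonoidAlgebra R (Fin d → ℤ))ˣ) : (AddMonoidAlgebra R (Fin d → ℤ))) := by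
    intro i z
    have hm : Units.map (θ i : (AddMonoidAlgebra R (Fin d → ℤ)) →* (AddMonoidAlgebra R (Fin d → ℤ))) F = F := by
      exact Units.ext (hfixF i)
    calc θ i ((F ^ z : (AddMonoidAlgebra R (Fin d → ℤ))ˣ) : (AddMonoidAlgebra R (Fin d → ℤ))) = ((Units.map (θ i : (AddMonoidAlgebra R (Fin d → ℤ)) →* (AddMonoidAlgebra R (Fin d → ℤ))) (F ^ z) : (AddMonoidAlgebra R (Fin d → ℤ))ˣ) : (AddMonoidAlgebra R (Fin d → ℤ))) := rfl
      _ = (((Units.map (θ i : (AddMonoidAlgebra R (Fin d → ℤ)) →* (AddMonoidAlgebra R (Fin d → ℤ))) F) ^ z : (AddMonoidAlgebra R (Fin d → ℤ))ˣ) : (AddMonoidAlgebra R (Fin d → ℤ))) := by rw [map_zpow]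
      _ = ((F ^ z : (AddMonoidAlgebra R (Fin d → ℤ))ˣ) : (AddMonoidAlgebra R (Fin d → ℤ))) := by rw [hm]
  -- main induction
  have key : ∀ (L : List (Fin p)) (m : Fin d → ℤ),
      ((L.map θ).foldr AlgHom.comp (AlgHom.id R (AddMonoidAlgebra R (Fin d → ℤ)))) (AddMonoidAlgebra.single m (1:R))
        = ↑(F ^ (L.map (fun i => (w i : ℤ) * nn i m)).sum) * AddMonoidAlgebra.single m (1:R) := by
    intro L m
    induction L with
    | nil => simp
    | cons i L ih =>
        simp only [List.map_cons, List.foldr_cons, AlgHom.comp_apply, List.sum_cons]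
        rw [ih, map_mul, hfix, hsingle, ← mul_assoc, ← Units.val_mul, ← zpow_add, add_comm]
  refine AddMonoidAlgebra.algHom_ext (fun m => ?_) (Subsingleton.elim _ _)
  rw [List.ofFn_eq_map, key]
  have : ((List.finRange p).map (fun i => (w i : ℤ) * nn i m)).sum = 0 := by
    rw [← Fin.sum_univ_def]; exact hbal m
  simp [this]
end
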